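/- If formal power series U and G (with zero constant term) satisfy U = x + U·G and G = 3x + G², then U = G/3; equivalently, the generating function of u_n is U(x) = (1 − √(1 − 12x))/6. -/

import Mathlib

open PowerSeries

/-- if formal power series `U`, `G` with zero constant term satisfy
`U = x + U*G` and `G = 3x + G²`, then `U = G/3`. -/
theorem U_eq_G_div_three (U G : PowerSeries ℚ)
    (hU0 : PowerSeries.constantCoeff U = 0)
    (hG0 : PowerSeries.constantCoeff G = 0)
    (hU : U = PowerSeries.X + U * G)
    (hG : G = 3 * PowerSeries.X + G ^ 2) :
    U = PowerSeries.C (1 / 3 : ℚ) * G := by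
  have hC : (PowerSeries.C (1/3 : ℚ)) * 3 = 1 := by
    have h3 : (3 : PowerSeries ℚ) = PowerSeries.C (3 : ℚ) := by
      simp [map_ofNat]
    rw [h3, ← map_mul]
    norm_num
  have h1 : (U - PowerSeries.C (1/3 : ℚ) * G) * (1 - G) = 0 := by
    linear_combination hU - PowerSeries.C (1/3 : ℚ) * hG - PowerSeries.X * hC
  have h2 : (1 - G) ≠ 0 := by
    intro h
    have := congrArg (PowerSeries.constantCoeff) h
    simp [hG0] at this
  rcases mul_eq_zero.mp h1 with h | h
  · exact sub_eq_zero.mp h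
  · exact absurd h h2
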